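/- Let v : [0, L] → ℝ be continuous with v(0) = 0 and v(L) = 1, and let β : [0, L] → ℝ be a function with |β(t) − 1| ≤ γ for all t, where 0 ≤ γ ≤ 1/2. If v is piecewise affine with nodes t_0 = 0 < t_1 < … < t_M = L, then Σ_{m=0}^{M−1} (1/√2)·|(β(t_m) v(t_m))² − 1| · |v(t_{m+1}) − v(t_m)| ≥ 1/(4√2) − C γ for a universal constant C > 0. -/

import Mathlib

noncomputable def phiPT (s : ℝ) : ℝ := min |s| (2/3) - (3/4) * (min |s| (2/3))^3

lemma phiPT_step (w a b : ℝ) (hw0 : 0 ≤ w) (hwa : 1 - 9/4 * a^2 ≤ w) :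
    phiPT b - phiPT a ≤ w * |b - a| := by
  have hab : (0:ℝ) ≤ |b - a| := abs_nonneg _
  set A := min |a| (2/3) with hAdef
  set B := min |b| (2/3) with hBdef
  have hA0 : 0 ≤ A := le_min (abs_nonneg a) (by norm_num)
  have hB0 : 0 ≤ B := le_min (abs_nonneg b) (by norm_num)
  have hA2 : A ≤ 2/3 := min_le_right _ _
  have hB2 : B ≤ 2/3 := min_le_right _ _
  have hgoal : phiPT b - phiPT a = B - (3/4) * B^3 - (A - (3/4) * A^3) := by
    simp [phiPT]
    rfl
  rw [hgoal]
  have hwA : 1 - 9/4 * A^2 ≤ w := by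
    rcases le_total |a| (2/3) with h | h
    · have hA : A = |a| := min_eq_left h
      rw [hA, sq_abs]; exact hwa
    · have hA : A = 2/3 := min_eq_right h
      rw [hA]; norm_num; linarith
  have hBA : B - A ≤ |b - a| := by
    rcases le_total |a| (2/3) with h | h
    · have hA : A = |a| := min_eq_left h
      have h1 : B ≤ |b| := min_le_left _ _
      have h2 : |b| - |a| ≤ |b - a| := abs_sub_abs_le_abs_sub b a
      linarith
    · have hA : A = 2/3 := min_eq_right h
      linarith
  rcases le_total B A with h | h
  · have hfac : (0:ℝ) ≤ 1 - 3/4 * (A^2 + A*B + B^2) := by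
      have hA2' : A^2 ≤ 4/9 := by nlinarith
      have hB2' : B^2 ≤ 4/9 := by nlinarith
      have hAB' : A*B ≤ 4/9 := by nlinarith [mul_nonneg hA0 hB0]
      linarith
    have h1 : B - (3/4) * B^3 - (A - (3/4) * A^3) ≤ 0 := by
      nlinarith [mul_nonneg (sub_nonneg.2 h) hfac]
    have h2 : 0 ≤ w * |b - a| := mul_nonneg hw0 hab
    linarith
  · have h1 : B - (3/4) * B^3 - (A - (3/4) * A^3) ≤ (1 - 9/4 * A^2) * (B - A) := by
      nlinarith [mul_nonneg (sq_nonneg (B - A)) (by linarith : (0:ℝ) ≤ B + 2*A)]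
    have h2 : (1 - 9/4 * A^2) * (B - A) ≤ w * (B - A) :=
      mul_le_mul_of_nonneg_right hwA (by linarith)
    have h3 : w * (B - A) ≤ w * |b - a| := mul_le_mul_of_nonneg_left hBA hw0
    linarith

theorem phase_transition_cost_lower_bound :
    ∃ C : ℝ, 0 < C ∧
      ∀ (L : ℝ) (_ : 0 < L) (M : ℕ) (_ : 0 < M) (t : ℕ → ℝ) (v β : ℝ → ℝ) (γ : ℝ),
        0 ≤ γ → γ ≤ 1 / 2 →
        ContinuousOn v (Set.Icc 0 L) →
        v 0 = 0 → v L = 1 →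
        (∀ s ∈ Set.Icc (0 : ℝ) L, |β s - 1| ≤ γ) →
        t 0 = 0 → t M = L →
        (∀ m < M, t m < t (m + 1)) →
        (∀ m < M, ∀ s ∈ Set.Icc (t m) (t (m + 1)),
          v s = v (t m) + (s - t m) / (t (m + 1) - t m) * (v (t (m + 1)) - v (t m))) →
        ∑ m ∈ Finset.range M,
            (1 / Real.sqrt 2) * |(β (t m) * v (t m)) ^ 2 - 1| * |v (t (m + 1)) - v (t m)|
          ≥ 1 / (4 * Real.sqrt 2) - C * γ := by
  refine ⟨1, one_pos, ?_⟩
  intro L hL M hM t v β γ hγ0 hγ2 _ hv0 hvL hβ ht0 htM htlt _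
  have hs2 : (0:ℝ) < Real.sqrt 2 := by positivity
  -- monotonicity of t on [0, M]
  have hmono : ∀ j ≤ M, ∀ i ≤ j, t i ≤ t j := by
    intro j hj
    induction j with
    | zero => intro i hi; rw [Nat.le_zero.mp hi]
    | succ n ih =>
        intro i hi
        rcases Nat.lt_succ_iff_lt_or_eq.mp (Nat.lt_succ_of_le hi) with h | h
        · have h1 : t i ≤ t n := ih (by omega) i (by omega)
          have h2 : t n < t (n + 1) := htlt n (by omega)
          linarith
        · rw [h]
  have htmem : ∀ m ≤ M, t m ∈ Set.Icc (0:ℝ) L := by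
    intro m hm
    constructor
    · rw [← ht0]; exact hmono m hm 0 (Nat.zero_le m)
    · rw [← htM]; exact hmono M le_rfl m hm
  -- per-term bound
  have hterm : ∀ m ∈ Finset.range M,
      (1 / Real.sqrt 2) * (phiPT (v (t (m+1))) - phiPT (v (t m))) ≤
      (1 / Real.sqrt 2) * |(β (t m) * v (t m)) ^ 2 - 1| * |v (t (m + 1)) - v (t m)| := by
    intro m hm
    have hmM : m < M := Finset.mem_range.mp hm
    have hβm : |β (t m) - 1| ≤ γ := hβ (t m) (htmem m hmM.le)
    have hβ2 : (β (t m))^2 ≤ 9/4 := by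
      have h1 : β (t m) - 1 ≤ γ := (abs_le.mp hβm).2
      have h2 : -γ ≤ β (t m) - 1 := (abs_le.mp hβm).1
      nlinarith
    have hw0 : 0 ≤ |(β (t m) * v (t m)) ^ 2 - 1| := abs_nonneg _
    have hwa : 1 - 9/4 * (v (t m))^2 ≤ |(β (t m) * v (t m)) ^ 2 - 1| := by
      have h1 : 1 - (β (t m) * v (t m)) ^ 2 ≤ |(β (t m) * v (t m)) ^ 2 - 1| := by
        rw [abs_sub_comm]; exact le_abs_self _
      have h2 : (β (t m) * v (t m)) ^ 2 ≤ 9/4 * (v (t m))^2 := by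
        rw [mul_pow]
        nlinarith [sq_nonneg (v (t m))]
      linarith
    have key := phiPT_step _ (v (t m)) (v (t (m+1))) hw0 hwa
    rw [mul_assoc]
    have h2s : (0:ℝ) ≤ 1 / Real.sqrt 2 := by positivity
    exact mul_le_mul_of_nonneg_left key h2s
  have hsum : (1 / Real.sqrt 2) * (phiPT (v (t M)) - phiPT (v (t 0))) ≤
      ∑ m ∈ Finset.range M,
        (1 / Real.sqrt 2) * |(β (t m) * v (t m)) ^ 2 - 1| * |v (t (m + 1)) - v (t m)| := by
    calc (1 / Real.sqrt 2) * (phiPT (v (t M)) - phiPT (v (t 0)))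
        = ∑ m ∈ Finset.range M, (1 / Real.sqrt 2) * (phiPT (v (t (m+1))) - phiPT (v (t m))) := by
          rw [← Finset.mul_sum, Finset.sum_range_sub (fun m => phiPT (v (t m)))]
      _ ≤ _ := Finset.sum_le_sum hterm
  have hval : phiPT (v (t M)) - phiPT (v (t 0)) = 4/9 := by
    rw [ht0, htM, hv0, hvL]
    have e1 : min |(1:ℝ)| (2/3) = 2/3 := by rw [abs_one]; exact min_eq_right (by norm_num)
    have e0 : min |(0:ℝ)| (2/3) = 0 := by rw [abs_zero]; exact min_eq_left (by norm_num)
    have h1 : phiPT 1 = 4/9 := by rw [phiPT, e1]; norm_num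
    have h0 : phiPT 0 = 0 := by rw [phiPT, e0]; norm_num
    rw [h1, h0]; norm_num
  rw [hval] at hsum
  have hfin : 1 / (4 * Real.sqrt 2) - 1 * γ ≤ (1 / Real.sqrt 2) * (4/9) := by
    have e : (1:ℝ) / (4 * Real.sqrt 2) = (1 / Real.sqrt 2) * (1/4) := by
      rw [one_div, mul_inv, one_div]; ring
    have h1 : (1 / Real.sqrt 2) * (1/4) ≤ (1 / Real.sqrt 2) * (4/9) :=
      mul_le_mul_of_nonneg_left (by norm_num) (by positivity)
    rw [e]; linarith
  linarith
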